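/- Fix y ∈ {−1, +1}, m ∈ ℝ and ν > 0. Then ∫ 2·max(0, 1 − yη) φ(η; m, ν²) dη = 2[ (1 − ym) Φ(1; ym, ν²) + ν² φ(1; ym, ν²) ]. -/

import Mathlib

open MeasureTheory Real Filter

/-- Gaussian density with mean `m` and variance `ν ^ 2`, evaluated at `x`:
`φ(x; m, ν²) = (2πν²)^{-1/2} exp(−(x−m)²/(2ν²))`. -/
noncomputable def gpdf (m ν x : ℝ) : ℝ :=
  (Real.sqrt (2 * Real.pi * ν ^ 2))⁻¹ * Real.exp (-((x - m) ^ 2) / (2 * ν ^ 2))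

/-- Gaussian cumulative distribution function with mean `m` and variance `ν ^ 2`:
`Φ(c; m, ν²) = ∫_{−∞}^{c} φ(η; m, ν²) dη`. -/
noncomputable def gcdf (m ν c : ℝ) : ℝ := ∫ x in Set.Iio c, gpdf m ν x

lemma gpdf_eq (m ν x : ℝ) :
    gpdf m ν x = (Real.sqrt (2 * Real.pi * ν ^ 2))⁻¹
      * Real.exp (-(1 / (2 * ν ^ 2)) * (x - m) ^ 2) := by
  rw [gpdf]; ring_nf

lemma gpdf_integrable (m ν : ℝ) (hν : 0 < ν) : Integrable (gpdf m ν) := by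
  have hb : (0:ℝ) < 1 / (2 * ν ^ 2) := by positivity
  have h := ((integrable_exp_neg_mul_sq hb).comp_sub_right m).const_mul
    ((Real.sqrt (2 * Real.pi * ν ^ 2))⁻¹)
  exact h.congr (by filter_upwards with x; rw [gpdf_eq])

lemma gpdf_mul_integrable (m ν : ℝ) (hν : 0 < ν) :
    Integrable (fun x => (m - x) * gpdf m ν x) := by
  have hb : (0:ℝ) < 1 / (2 * ν ^ 2) := by positivity
  have h := (((integrable_mul_exp_neg_mul_sq hb).comp_sub_right m).const_mul
    (-(Real.sqrt (2 * Real.pi * ν ^ 2))⁻¹))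
  refine h.congr ?_
  filter_upwards with x
  rw [gpdf_eq]; ring

lemma gpdf_hasDerivAt (m ν : ℝ) (hν : 0 < ν) (x : ℝ) :
    HasDerivAt (fun x => ν ^ 2 * gpdf m ν x) ((m - x) * gpdf m ν x) x := by
  have hν2 : (2 * ν ^ 2) ≠ 0 := by positivity
  have h1 : HasDerivAt (fun x : ℝ => -((x - m) ^ 2) / (2 * ν ^ 2))
      (-(2 * (x - m)) / (2 * ν ^ 2)) x := by
    have : HasDerivAt (fun x : ℝ => (x - m) ^ 2) (2 * (x - m)) x := by
      have h := ((hasDerivAt_id x).sub_const m).pow 2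
      simp at h
      exact h
    simpa using this.neg.div_const (2 * ν ^ 2)
  have h2 := (h1.exp.const_mul ((Real.sqrt (2 * Real.pi * ν ^ 2))⁻¹)).const_mul (ν ^ 2)
  refine h2.congr_deriv ?_
  rw [gpdf]
  field_simp
  ring

lemma gpdf_tendsto_atBot (m ν : ℝ) (hν : 0 < ν) :
    Tendsto (fun x => ν ^ 2 * gpdf m ν x) atBot (nhds 0) := by
  have hb : (0:ℝ) < 1 / (2 * ν ^ 2) := by positivity
  have hsq : Tendsto (fun x : ℝ => (x - m) ^ 2) atBot atTop := by
    have h := (tendsto_pow_atTop (n := 2) two_ne_zero).comp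
      (tendsto_abs_atBot_atTop.comp (tendsto_atBot_add_const_right atBot (-m) tendsto_id))
    simpa [Function.comp_def, sub_eq_add_neg, sq_abs] using h
  have h1 : Tendsto (fun x : ℝ => -((x - m) ^ 2) / (2 * ν ^ 2)) atBot atBot :=
    (tendsto_neg_atTop_atBot.comp hsq).atBot_div_const (by positivity)
  have h2 : Tendsto (fun x => Real.exp (-((x - m) ^ 2) / (2 * ν ^ 2))) atBot (nhds 0) :=
    Real.tendsto_exp_atBot.comp h1
  have h3 := (h2.const_mul ((Real.sqrt (2 * Real.pi * ν ^ 2))⁻¹)).const_mul (ν ^ 2)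
  simpa [gpdf] using h3

theorem svc_Psi0 (y m ν : ℝ) (hy : y = -1 ∨ y = 1) (hν : 0 < ν) :
    ∫ η, 2 * max 0 (1 - y * η) * gpdf m ν η
      = 2 * ((1 - y * m) * gcdf (y * m) ν 1 + ν ^ 2 * gpdf (y * m) ν 1) := by
  have key : ∀ μ : ℝ, ∫ η, 2 * max 0 (1 - η) * gpdf μ ν η
      = 2 * ((1 - μ) * gcdf μ ν 1 + ν ^ 2 * gpdf μ ν 1) := by
    intro μ
    have hI : Integrable (gpdf μ ν) := gpdf_integrable μ ν hν
    have hI2 : Integrable (fun x => (μ - x) * gpdf μ ν x) := gpdf_mul_integrable μ ν hν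
    have step1 : ∫ η, 2 * max 0 (1 - η) * gpdf μ ν η
        = ∫ η in Set.Iio 1, 2 * (1 - η) * gpdf μ ν η := by
      rw [← setIntegral_eq_integral_of_forall_compl_eq_zero (s := Set.Iio 1)
        (fun x hx => by
          have : (1:ℝ) ≤ x := not_lt.mp hx
          simp [max_eq_left (by linarith : (1:ℝ) - x ≤ 0)])]
      refine setIntegral_congr_fun measurableSet_Iio (fun x hx => ?_)
      have : (0:ℝ) ≤ 1 - x := by simpa using le_of_lt (Set.mem_Iio.mp hx)
      rw [max_eq_right this]
    have ftc : ∫ η in Set.Iio 1, (μ - η) * gpdf μ ν η = ν ^ 2 * gpdf μ ν 1 := by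
      rw [← integral_Iic_eq_integral_Iio]
      have h := integral_Iic_of_hasDerivAt_of_tendsto'
        (f := fun x => ν ^ 2 * gpdf μ ν x) (f' := fun x => (μ - x) * gpdf μ ν x) (a := 1)
        (fun x _ => gpdf_hasDerivAt μ ν hν x) hI2.integrableOn (gpdf_tendsto_atBot μ ν hν)
      simpa using h
    rw [step1]
    have split : ∀ η : ℝ, 2 * (1 - η) * gpdf μ ν η
        = 2 * (1 - μ) * gpdf μ ν η + 2 * ((μ - η) * gpdf μ ν η) := fun η => by ring
    rw [integral_congr_ae (Eventually.of_forall (fun η => split η)),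
      integral_add ((hI.const_mul _).integrableOn) ((hI2.const_mul 2).integrableOn),
      integral_const_mul, integral_const_mul, ftc, gcdf]
    ring
  rcases hy with rfl | rfl
  · have hneg : ∀ η : ℝ, 2 * max 0 (1 - (-1) * η) * gpdf m ν η
        = (fun x => 2 * max 0 (1 - x) * gpdf (-m) ν x) (-η) := by
      intro η
      have : gpdf (-m) ν (-η) = gpdf m ν η := by
        unfold gpdf; ring_nf
      simp only [this]
      ring_nf
    rw [integral_congr_ae (Eventually.of_forall hneg),
      integral_neg_eq_self (fun x => 2 * max 0 (1 - x) * gpdf (-m) ν x) volume]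
    simpa using key (-m)
  · simpa using key m
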